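/- arXiv:1401.1509 — 2 statements merged into one kernel-verified Lean document; each statement's English description precedes it below -/
import Mathlib

section
/- Let ω0 ≠ 0 and let N ∈ ℝ[q1, p1, q2, p2] be a polynomial satisfying N(q1, p1 + t·q1, cos(ω0 t)·q2 − sin(ω0 t)·p2, sin(ω0 t)·q2 + cos(ω0 t)·p2) = N(q1, p1, q2, p2) for all t ∈ ℝ and all (q1,p1,q2,p2) ∈ ℝ⁴. Then there is a polynomial Q in two variables with N(q1, p1, q2, p2) = Q(q1, q2² + p2²). -/
open MvPolynomial Real

lemma poly_eval_eval₂ (x : ℝ) (f : Fin 4 → Polynomial ℝ) (N : MvPolynomial (Fin 4) ℝ) :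
    Polynomial.eval x (MvPolynomial.eval₂ Polynomial.C f N)
      = MvPolynomial.eval (fun i => (f i).eval x) N := by
  have h := MvPolynomial.eval₂_comp_left (Polynomial.evalRingHom x) Polynomial.C f N
  have h2 : (Polynomial.evalRingHom x).comp Polynomial.C = RingHom.id ℝ := by
    ext r; simp
  simpa [h2, Function.comp_def] using h

lemma periodic_poly_const (g : Polynomial ℝ) (c : ℝ) (hc : c ≠ 0)
    (hper : ∀ x : ℝ, g.eval (x + c) = g.eval x) (x : ℝ) : g.eval x = g.eval 0 := by
  have key : g - Polynomial.C (g.eval 0) = 0 := by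
    apply Polynomial.eq_zero_of_infinite_isRoot
    apply Set.infinite_of_injective_forall_mem (f := fun n : ℕ => (n : ℝ) * c)
    · intro a b hab
      have : (a : ℝ) = b := mul_right_cancel₀ hc hab
      exact_mod_cast this
    · intro n
      have : g.eval ((n : ℝ) * c) = g.eval 0 := by
        induction n with
        | zero => simp
        | succ k ih => push_cast; rw [add_mul, one_mul, hper, ih]
      simp [Polynomial.IsRoot, this]
  have := congrArg (Polynomial.eval x) key
  simpa [sub_eq_zero] using this

/-- Characterization of normal-form polynomials for the `0²iω` resonance: a real
polynomial in `(q1,p1,q2,p2)` invariant under the combined shear/rotation flow is a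
polynomial in `q1` and `q2² + p2²`. -/
theorem resonance_invariant_polynomial (ω0 : ℝ) (hω : ω0 ≠ 0) (N : MvPolynomial (Fin 4) ℝ)
    (h : ∀ (t q1 p1 q2 p2 : ℝ),
      MvPolynomial.eval
        ![q1, p1 + t * q1,
          Real.cos (ω0 * t) * q2 - Real.sin (ω0 * t) * p2,
          Real.sin (ω0 * t) * q2 + Real.cos (ω0 * t) * p2] N
      = MvPolynomial.eval ![q1, p1, q2, p2] N) :
    ∃ Q : MvPolynomial (Fin 2) ℝ, ∀ q1 p1 q2 p2 : ℝ,
      MvPolynomial.eval ![q1, p1, q2, p2] N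
        = MvPolynomial.eval ![q1, q2 ^ 2 + p2 ^ 2] Q := by
  -- Step 1: independence of p1
  have hp1' : ∀ q1 p1 q2 p2 : ℝ, q1 ≠ 0 →
      MvPolynomial.eval ![q1, p1, q2, p2] N = MvPolynomial.eval ![q1, 0, q2, p2] N := by
    intro q1 p1 q2 p2 hq1
    set g : Polynomial ℝ :=
      MvPolynomial.eval₂ Polynomial.C
        ![Polynomial.C q1, Polynomial.X, Polynomial.C q2, Polynomial.C p2] N with hgdef
    have hg : ∀ x : ℝ, g.eval x = MvPolynomial.eval ![q1, x, q2, p2] N := by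
      intro x
      have hfun : (fun i => Polynomial.eval x
          (![Polynomial.C q1, Polynomial.X, Polynomial.C q2, Polynomial.C p2] i))
          = ![q1, x, q2, p2] := by funext i; fin_cases i <;> simp
      rw [hgdef, poly_eval_eval₂, hfun]
    have hper : ∀ x : ℝ, g.eval (x + 2 * π / ω0 * q1) = g.eval x := by
      intro x
      rw [hg, hg]
      have ht := h (2 * π / ω0) q1 x q2 p2
      have hωt : ω0 * (2 * π / ω0) = 2 * π := by field_simp
      rw [hωt, Real.cos_two_pi, Real.sin_two_pi] at ht
      simpa using ht
    have hc : 2 * π / ω0 * q1 ≠ 0 :=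
      mul_ne_zero (div_ne_zero (by positivity) hω) hq1
    have := periodic_poly_const g _ hc hper p1
    rwa [hg, hg] at this
  have hp1 : ∀ q1 p1 q2 p2 : ℝ,
      MvPolynomial.eval ![q1, p1, q2, p2] N = MvPolynomial.eval ![q1, 0, q2, p2] N := by
    intro q1 p1 q2 p2
    set d : Polynomial ℝ :=
      MvPolynomial.eval₂ Polynomial.C
        ![Polynomial.X, Polynomial.C p1, Polynomial.C q2, Polynomial.C p2] N -
      MvPolynomial.eval₂ Polynomial.C
        ![Polynomial.X, Polynomial.C 0, Polynomial.C q2, Polynomial.C p2] N with hddef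
    have hd : ∀ x : ℝ, d.eval x =
        MvPolynomial.eval ![x, p1, q2, p2] N - MvPolynomial.eval ![x, 0, q2, p2] N := by
      intro x
      have hfun1 : (fun i => Polynomial.eval x
          (![Polynomial.X, Polynomial.C p1, Polynomial.C q2, Polynomial.C p2] i))
          = ![x, p1, q2, p2] := by funext i; fin_cases i <;> simp
      have hfun2 : (fun i => Polynomial.eval x
          (![Polynomial.X, Polynomial.C 0, Polynomial.C q2, Polynomial.C p2] i))
          = ![x, (0:ℝ), q2, p2] := by funext i; fin_cases i <;> simp
      rw [hddef, Polynomial.eval_sub, poly_eval_eval₂, poly_eval_eval₂, hfun1, hfun2]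
    have hzero : d = 0 := by
      apply Polynomial.eq_zero_of_infinite_isRoot
      apply Set.Infinite.mono (s := {x : ℝ | x ≠ 0})
      · intro x hx
        simp only [Set.mem_setOf_eq, Polynomial.IsRoot]
        rw [hd, sub_eq_zero]
        exact hp1' x p1 q2 p2 hx
      · exact (Set.finite_singleton (0:ℝ)).infinite_compl
    have := congrArg (Polynomial.eval q1) hzero
    rw [hd] at this
    simp only [Polynomial.eval_zero] at this
    linarith [this]
  -- Step 2: rotation invariance
  have hrot : ∀ θ q1 p1 q2 p2 : ℝ,
      MvPolynomial.eval ![q1, p1, Real.cos θ * q2 - Real.sin θ * p2,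
        Real.sin θ * q2 + Real.cos θ * p2] N
      = MvPolynomial.eval ![q1, p1, q2, p2] N := by
    intro θ q1 p1 q2 p2
    have ht := h (θ / ω0) q1 p1 q2 p2
    have hωt : ω0 * (θ / ω0) = θ := by field_simp
    rw [hωt] at ht
    calc MvPolynomial.eval ![q1, p1, Real.cos θ * q2 - Real.sin θ * p2,
          Real.sin θ * q2 + Real.cos θ * p2] N
        = MvPolynomial.eval ![q1, 0, Real.cos θ * q2 - Real.sin θ * p2,
          Real.sin θ * q2 + Real.cos θ * p2] N := hp1 _ _ _ _
      _ = MvPolynomial.eval ![q1, p1 + θ / ω0 * q1, Real.cos θ * q2 - Real.sin θ * p2,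
          Real.sin θ * q2 + Real.cos θ * p2] N := (hp1 _ _ _ _).symm
      _ = MvPolynomial.eval ![q1, p1, q2, p2] N := ht
  -- Step 3: radial reduction
  have hradial : ∀ q1 q2 p2 : ℝ,
      MvPolynomial.eval ![q1, 0, q2, p2] N
      = MvPolynomial.eval ![q1, 0, Real.sqrt (q2 ^ 2 + p2 ^ 2), 0] N := by
    intro q1 q2 p2
    by_cases hz : q2 = 0 ∧ p2 = 0
    · obtain ⟨h1, h2⟩ := hz
      subst h1; subst h2
      norm_num
    · set z : ℂ := ⟨q2, p2⟩ with hzdef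
      have hzne : z ≠ 0 := by
        intro h0
        apply hz
        rw [Complex.ext_iff] at h0
        simpa [hzdef] using h0
      set r : ℝ := Real.sqrt (q2 ^ 2 + p2 ^ 2) with hrdef
      have habs : ‖z‖ = r := by
        rw [Complex.norm_def, Complex.normSq_mk]
        ring_nf
        exact hrdef.symm
      have hrne : r ≠ 0 := by
        rw [← habs]
        simpa using hzne
      have hcos : Real.cos z.arg = q2 / r := by rw [Complex.cos_arg hzne, habs]
      have hsin : Real.sin z.arg = p2 / r := by rw [Complex.sin_arg, habs]
      have := hrot z.arg q1 0 r 0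
      rw [hcos, hsin] at this
      rw [mul_zero, mul_zero, sub_zero, add_zero, div_mul_cancel₀ _ hrne,
        div_mul_cancel₀ _ hrne] at this
      exact this
  -- Step 4: the two-variable restriction
  set R : MvPolynomial (Fin 2) ℝ :=
    MvPolynomial.eval₂ MvPolynomial.C
      ![MvPolynomial.X 0, MvPolynomial.C 0, MvPolynomial.X 1, MvPolynomial.C 0] N with hRdef
  have heval : ∀ a b : ℝ,
      MvPolynomial.eval ![a, b] R = MvPolynomial.eval ![a, 0, b, 0] N := by
    intro a b
    have hfun : (⇑(MvPolynomial.eval ![a, b]) ∘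
        ![MvPolynomial.X 0, MvPolynomial.C 0, MvPolynomial.X 1, MvPolynomial.C 0]
        : Fin 4 → ℝ) = ![a, 0, b, 0] := by funext i; fin_cases i <;> simp
    rw [hRdef, ← MvPolynomial.eval_assoc, hfun]
  have heven : ∀ a b : ℝ,
      MvPolynomial.eval ![a, -b] R = MvPolynomial.eval ![a, b] R := by
    intro a b
    rw [heval, heval]
    calc MvPolynomial.eval ![a, 0, -b, 0] N
        = MvPolynomial.eval ![a, 0, Real.sqrt ((-b) ^ 2 + 0 ^ 2), 0] N := hradial a (-b) 0
      _ = MvPolynomial.eval ![a, 0, Real.sqrt (b ^ 2 + 0 ^ 2), 0] N := by rw [neg_sq]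
      _ = MvPolynomial.eval ![a, 0, b, 0] N := (hradial a b 0).symm
  -- Step 5: build Q
  set F : Finset ((Fin 2) →₀ ℕ) := R.support.filter (fun d => Even (d 1)) with hFdef
  refine ⟨∑ d ∈ F, MvPolynomial.C (R.coeff d) * MvPolynomial.X 0 ^ d 0
    * MvPolynomial.X 1 ^ (d 1 / 2), ?_⟩
  have hR : ∀ a x : ℝ, MvPolynomial.eval ![a, x] R
      = ∑ d ∈ R.support, R.coeff d * (a ^ d 0 * x ^ d 1) := by
    intro a x
    rw [MvPolynomial.eval_eq']
    refine Finset.sum_congr rfl fun d _ => ?_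
    rw [Fin.prod_univ_two]
    simp
  have hOzero : ∀ a x : ℝ,
      (∑ d ∈ R.support.filter (fun d => ¬ Even (d 1)), R.coeff d * (a ^ d 0 * x ^ d 1)) = 0 := by
    intro a x
    have hsplit : ∀ y : ℝ, MvPolynomial.eval ![a, y] R
        = (∑ d ∈ F, R.coeff d * (a ^ d 0 * y ^ d 1))
          + ∑ d ∈ R.support.filter (fun d => ¬ Even (d 1)), R.coeff d * (a ^ d 0 * y ^ d 1) := by
      intro y
      rw [hR, hFdef, Finset.sum_filter_add_sum_filter_not]
    have h1 := heven a x
    rw [hsplit, hsplit] at h1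
    have hE : (∑ d ∈ F, R.coeff d * (a ^ d 0 * (-x) ^ d 1))
        = ∑ d ∈ F, R.coeff d * (a ^ d 0 * x ^ d 1) := by
      refine Finset.sum_congr rfl fun d hd => ?_
      rw [hFdef, Finset.mem_filter] at hd
      rw [hd.2.neg_pow]
    have hO : (∑ d ∈ R.support.filter (fun d => ¬ Even (d 1)),
          R.coeff d * (a ^ d 0 * (-x) ^ d 1))
        = - ∑ d ∈ R.support.filter (fun d => ¬ Even (d 1)),
            R.coeff d * (a ^ d 0 * x ^ d 1) := by
      rw [← Finset.sum_neg_distrib]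
      refine Finset.sum_congr rfl fun d hd => ?_
      rw [Finset.mem_filter] at hd
      rw [(Nat.odd_iff.mpr (Nat.not_even_iff.mp hd.2)).neg_pow]
      ring
    rw [hE, hO] at h1
    linarith
  have hQ : ∀ a x : ℝ,
      MvPolynomial.eval ![a, x ^ 2] (∑ d ∈ F, MvPolynomial.C (R.coeff d)
        * MvPolynomial.X 0 ^ d 0 * MvPolynomial.X 1 ^ (d 1 / 2))
      = MvPolynomial.eval ![a, x] R := by
    intro a x
    rw [map_sum]
    have : ∀ d ∈ F, MvPolynomial.eval ![a, x ^ 2]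
        (MvPolynomial.C (R.coeff d) * MvPolynomial.X 0 ^ d 0 * MvPolynomial.X 1 ^ (d 1 / 2))
        = R.coeff d * (a ^ d 0 * x ^ d 1) := by
      intro d hd
      rw [hFdef, Finset.mem_filter] at hd
      obtain ⟨k, hk⟩ := hd.2
      have hdk : d 1 = 2 * k := by omega
      have hk2 : d 1 / 2 = k := by omega
      simp only [map_mul, map_pow, MvPolynomial.eval_C, MvPolynomial.eval_X]
      rw [hk2, hdk]
      have : (![a, x ^ 2] (1 : Fin 2)) ^ k = x ^ (2 * k) := by
        simp [pow_mul]
      rw [this]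
      simp [mul_assoc]
    rw [Finset.sum_congr rfl this]
    rw [hR, ← Finset.sum_filter_add_sum_filter_not R.support (fun d => Even (d 1)), hOzero,
      add_zero, hFdef]
  -- Step 6: conclude
  intro q1 p1 q2 p2
  have hnn : (0:ℝ) ≤ q2 ^ 2 + p2 ^ 2 := by positivity
  have hr2 : Real.sqrt (q2 ^ 2 + p2 ^ 2) ^ 2 = q2 ^ 2 + p2 ^ 2 := Real.sq_sqrt hnn
  calc MvPolynomial.eval ![q1, p1, q2, p2] N
      = MvPolynomial.eval ![q1, 0, q2, p2] N := hp1 _ _ _ _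
    _ = MvPolynomial.eval ![q1, 0, Real.sqrt (q2 ^ 2 + p2 ^ 2), 0] N := hradial _ _ _
    _ = MvPolynomial.eval ![q1, Real.sqrt (q2 ^ 2 + p2 ^ 2)] R :=
        (heval q1 (Real.sqrt (q2 ^ 2 + p2 ^ 2))).symm
    _ = MvPolynomial.eval ![q1, Real.sqrt (q2 ^ 2 + p2 ^ 2) ^ 2]
          (∑ d ∈ F, MvPolynomial.C (R.coeff d) * MvPolynomial.X 0 ^ d 0
            * MvPolynomial.X 1 ^ (d 1 / 2)) := (hQ q1 _).symm
    _ = _ := by rw [hr2]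
end

section
/- Let L0 : ℝ^m → ℝ^m be linear and let A be the operator on homogeneous polynomials of degree ℓ defined by (A S)(x) = DS(x)·(L0 x). Then with respect to the inner product ⟨S, S'⟩ = (S(∂_x)S')(0), the adjoint of A is given by (A* S)(x) = DS(x)·(L0ᵀ x), i.e. ⟨A S, S'⟩ = ⟨S, A* S'⟩ for all homogeneous polynomials S, S' of degree ℓ. -/
open MvPolynomial

/-- Apply the differential monomial `∂^α` to a polynomial. -/
noncomputable def applyDerivs {m : ℕ} (α : Fin m →₀ ℕ) (P : MvPolynomial (Fin m) ℝ) :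
    MvPolynomial (Fin m) ℝ :=
  (List.ofFn fun i : Fin m =>
      (((pderiv i).toLinearMap ^ (α i)) : Module.End ℝ (MvPolynomial (Fin m) ℝ))).foldl
    (fun Q op => op Q) P

/-- The pairing `⟨S, S'⟩ = (S(∂ₓ) S')(0)`. -/
noncomputable def diffPairing {m : ℕ} (S P : MvPolynomial (Fin m) ℝ) : ℝ :=
  ∑ α ∈ S.support, S.coeff α * MvPolynomial.eval 0 (applyDerivs α P)

/-- The homological operator `(A S)(x) = DS(x)·(L x)`. -/
noncomputable def homOp {m : ℕ} (L : Matrix (Fin m) (Fin m) ℝ)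
    (S : MvPolynomial (Fin m) ℝ) : MvPolynomial (Fin m) ℝ :=
  ∑ i, (∑ j, MvPolynomial.C (L i j) * MvPolynomial.X j) * MvPolynomial.pderiv i S

variable {m : ℕ}

lemma nat_desc_aux (n k : ℕ) : n * (n-1).descFactorial k = n.descFactorial (k+1) := by
  cases n with
  | zero => simp
  | succ n => exact (Nat.succ_descFactorial_succ n k).symm

lemma pow_pderiv_monomial (i : Fin m) (k : ℕ) (β : Fin m →₀ ℕ) (c : ℝ) :
    (((pderiv i).toLinearMap ^ k) : Module.End ℝ (MvPolynomial (Fin m) ℝ)) (monomial β c)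
      = monomial (β - Finsupp.single i k) (((β i).descFactorial k : ℝ) * c) := by
  induction k generalizing β c with
  | zero => simp
  | succ k ih =>
      have h1 : ((pderiv i).toLinearMap) ((monomial β) c)
          = monomial (β - Finsupp.single i 1) (c * β i) := pderiv_monomial
      rw [pow_succ, Module.End.mul_apply, h1, ih]
      congr 1
      · rw [tsub_tsub, ← Finsupp.single_add, add_comm 1 k]
      · rw [Finsupp.tsub_apply, Finsupp.single_apply, if_pos rfl, ← nat_desc_aux (β i) k]
        push_cast
        ring

lemma foldl_monomial (α : Fin m →₀ ℕ) (l : List (Fin m)) (hl : l.Nodup) (β : Fin m →₀ ℕ) (c : ℝ) :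
    l.foldl (fun Q i => (((pderiv i).toLinearMap ^ (α i)) :
        Module.End ℝ (MvPolynomial (Fin m) ℝ)) Q) (monomial β c)
      = monomial (β - ∑ i ∈ l.toFinset, Finsupp.single i (α i))
          ((∏ i ∈ l.toFinset, ((β i).descFactorial (α i) : ℝ)) * c) := by
  induction l generalizing β c with
  | nil => simp
  | cons i l ih =>
      have hi : i ∉ l := (List.nodup_cons.mp hl).1
      have hl' : l.Nodup := (List.nodup_cons.mp hl).2
      have hif : i ∉ l.toFinset := by simpa using hi
      rw [List.foldl_cons, pow_pderiv_monomial, ih hl', List.toFinset_cons,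
        Finset.sum_insert hif, Finset.prod_insert hif]
      congr 1
      · rw [tsub_tsub]
      · rw [Finset.prod_congr rfl (fun j hj => ?_)]
        · ring
        · congr 2
          rw [Finsupp.tsub_apply, Finsupp.single_apply,
            if_neg (by rintro rfl; exact hif hj), Nat.sub_zero]

lemma sum_single_univ (α : Fin m →₀ ℕ) :
    ∑ i : Fin m, Finsupp.single i (α i) = α := by
  ext j
  rw [Finsupp.finset_sum_apply]
  simp [Finsupp.single_apply]

lemma applyDerivs_monomial (α β : Fin m →₀ ℕ) (c : ℝ) :
    applyDerivs α (monomial β c)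
      = monomial (β - α) ((∏ i, ((β i).descFactorial (α i) : ℝ)) * c) := by
  rw [applyDerivs, List.ofFn_eq_map, List.foldl_map,
    foldl_monomial α _ (List.nodup_finRange m), List.toFinset_finRange, sum_single_univ]

lemma eval_zero_monomial (γ : Fin m →₀ ℕ) (K : ℝ) :
    MvPolynomial.eval 0 (monomial γ K) = if γ = 0 then K else 0 := by
  by_cases h : γ = 0
  · subst h; simp
  · rw [if_neg h, eval_monomial]
    obtain ⟨j, hj⟩ : ∃ j, γ j ≠ 0 := by
      by_contra hc; push_neg at hc; exact h (Finsupp.ext hc)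
    rw [Finsupp.prod]
    refine mul_eq_zero_of_right _ (Finset.prod_eq_zero (Finsupp.mem_support_iff.mpr hj) ?_)
    simp [zero_pow hj]

lemma applyDerivs_add (α : Fin m →₀ ℕ) (p q : MvPolynomial (Fin m) ℝ) :
    applyDerivs α (p + q) = applyDerivs α p + applyDerivs α q := by
  rw [applyDerivs, applyDerivs, applyDerivs]
  generalize (List.ofFn fun i : Fin m =>
    (((pderiv i).toLinearMap ^ (α i)) : Module.End ℝ (MvPolynomial (Fin m) ℝ))) = l
  induction l generalizing p q with
  | nil => simp
  | cons op l ih => simp only [List.foldl_cons, map_add]; exact ih _ _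

noncomputable def nfact {m : ℕ} (α : Fin m →₀ ℕ) : ℝ := ∏ i, ((α i).factorial : ℝ)

lemma eval_zero_applyDerivs (α : Fin m →₀ ℕ) (P : MvPolynomial (Fin m) ℝ) :
    MvPolynomial.eval 0 (applyDerivs α P) = nfact α * coeff α P := by
  induction P using MvPolynomial.induction_on' with
  | add p q hp hq =>
      rw [applyDerivs_add, map_add, hp, hq, coeff_add]; ring
  | monomial β c =>
      rw [applyDerivs_monomial, eval_zero_monomial, coeff_monomial]
      by_cases h : β = α
      · subst h
        rw [if_pos (tsub_self β), if_pos rfl, nfact]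
        congr 1
        exact Finset.prod_congr rfl fun i _ => by rw [Nat.descFactorial_self]
      · rw [if_neg (fun hh => h hh), mul_zero]
        by_cases hle : α ≤ β
        · have hne : β - α ≠ 0 := by
            intro h0
            exact h (le_antisymm (tsub_eq_zero_iff_le.mp h0) hle)
          rw [if_neg hne]
        · obtain ⟨j, hj⟩ : ∃ j, ¬ α j ≤ β j := by
            by_contra hc; push_neg at hc; exact hle (Finsupp.le_def.mpr hc)
          have : (∏ i, (((β i).descFactorial (α i) : ℝ))) = 0 :=
            Finset.prod_eq_zero (Finset.mem_univ j)
              (by rw [Nat.descFactorial_eq_zero_iff_lt.mpr (Nat.lt_of_not_le hj)]; norm_num)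
          rw [this, zero_mul]
          simp

lemma diffPairing_eq_sum (S P : MvPolynomial (Fin m) ℝ) (t : Finset (Fin m →₀ ℕ))
    (ht : S.support ⊆ t) :
    diffPairing S P = ∑ α ∈ t, coeff α S * (nfact α * coeff α P) := by
  rw [diffPairing]
  rw [Finset.sum_congr rfl fun α _ => by rw [eval_zero_applyDerivs]]
  exact Finset.sum_subset ht fun x _ hx => by
    rw [MvPolynomial.notMem_support_iff.mp hx, zero_mul]

lemma diffPairing_comm (S P : MvPolynomial (Fin m) ℝ) :
    diffPairing S P = diffPairing P S := by
  rw [diffPairing_eq_sum S P (S.support ∪ P.support) Finset.subset_union_left,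
    diffPairing_eq_sum P S (S.support ∪ P.support) Finset.subset_union_right]
  exact Finset.sum_congr rfl fun α _ => by ring

lemma coeff_pderiv (j : Fin m) (P : MvPolynomial (Fin m) ℝ) (α : Fin m →₀ ℕ) :
    coeff α (pderiv j P) = ((α j : ℝ) + 1) * coeff (α + Finsupp.single j 1) P := by
  induction P using MvPolynomial.induction_on' with
  | add p q hp hq => rw [map_add, coeff_add, hp, hq, coeff_add]; ring
  | monomial s a =>
      rw [pderiv_monomial, coeff_monomial, coeff_monomial]
      by_cases h : s = α + Finsupp.single j 1
      · subst h
        rw [if_pos (add_tsub_cancel_right _ _), if_pos rfl]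
        rw [Finsupp.add_apply, Finsupp.single_apply, if_pos rfl]
        push_cast; ring
      · rw [if_neg h, mul_zero]
        by_cases h2 : s - Finsupp.single j 1 = α
        · rw [if_pos h2]
          by_cases h3 : s j = 0
          · simp [h3]
          · exfalso
            apply h
            rw [← h2, tsub_add_cancel_of_le]
            rw [Finsupp.single_le_iff]
            omega
        · rw [if_neg h2]

lemma nfact_add_single (α : Fin m →₀ ℕ) (j : Fin m) :
    nfact (α + Finsupp.single j 1) = ((α j : ℝ) + 1) * nfact α := by
  have h2 : ((α + Finsupp.single j 1 : Fin m →₀ ℕ)) j = α j + 1 := by simp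
  have h1 : ∀ i ∈ Finset.univ.erase j,
      ((((α + Finsupp.single j 1 : Fin m →₀ ℕ)) i).factorial : ℝ) = ((α i).factorial : ℝ) := by
    intro i hi
    have hij : i ≠ j := (Finset.mem_erase.mp hi).1
    rw [Finsupp.add_apply, Finsupp.single_apply, if_neg (fun hh => hij hh.symm), Nat.add_zero]
  rw [nfact, nfact, ← Finset.mul_prod_erase Finset.univ _ (Finset.mem_univ j),
    ← Finset.mul_prod_erase Finset.univ (fun i => ((α i).factorial : ℝ)) (Finset.mem_univ j),
    h2, Nat.factorial_succ, Finset.prod_congr rfl h1]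
  push_cast; ring

lemma diffPairing_X_mul (j : Fin m) (Q P : MvPolynomial (Fin m) ℝ) :
    diffPairing (X j * Q) P = diffPairing Q (pderiv j P) := by
  classical
  have hsub : (X j * Q).support ⊆ Q.support.image (· + Finsupp.single j 1) := by
    intro β hβ
    have hc := MvPolynomial.mem_support_iff.mp hβ
    rw [coeff_X_mul'] at hc
    by_cases hjs : j ∈ β.support
    · rw [if_pos hjs] at hc
      refine Finset.mem_image.mpr ⟨β - Finsupp.single j 1, MvPolynomial.mem_support_iff.mpr hc, ?_⟩
      rw [tsub_add_cancel_of_le]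
      rw [Finsupp.single_le_iff]
      have := Finsupp.mem_support_iff.mp hjs
      omega
    · rw [if_neg hjs] at hc; exact absurd rfl hc
  rw [diffPairing_eq_sum (X j * Q) P _ hsub,
    diffPairing_eq_sum Q (pderiv j P) Q.support (subset_refl _),
    Finset.sum_image (fun a _ b _ h => by exact add_right_cancel h)]
  refine Finset.sum_congr rfl fun α _ => ?_
  have hX : coeff (α + Finsupp.single j 1) (X j * Q) = coeff α Q := by
    rw [add_comm]; exact coeff_X_mul α j Q
  rw [hX, nfact_add_single, coeff_pderiv]
  ring

lemma diffPairing_add_left (S T P : MvPolynomial (Fin m) ℝ) :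
    diffPairing (S + T) P = diffPairing S P + diffPairing T P := by
  rw [diffPairing_eq_sum (S + T) P (S.support ∪ T.support) MvPolynomial.support_add,
    diffPairing_eq_sum S P (S.support ∪ T.support) Finset.subset_union_left,
    diffPairing_eq_sum T P (S.support ∪ T.support) Finset.subset_union_right,
    ← Finset.sum_add_distrib]
  exact Finset.sum_congr rfl fun α _ => by rw [coeff_add]; ring

lemma diffPairing_smul_left (a : ℝ) (S P : MvPolynomial (Fin m) ℝ) :
    diffPairing (a • S) P = a * diffPairing S P := by
  rw [diffPairing_eq_sum (a • S) P S.support (MvPolynomial.support_smul),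
    diffPairing_eq_sum S P S.support (subset_refl _), Finset.mul_sum]
  exact Finset.sum_congr rfl fun α _ => by rw [MvPolynomial.coeff_smul, smul_eq_mul]; ring

lemma diffPairing_sum_left {ι : Type*} (t : Finset ι) (f : ι → MvPolynomial (Fin m) ℝ)
    (P : MvPolynomial (Fin m) ℝ) :
    diffPairing (∑ k ∈ t, f k) P = ∑ k ∈ t, diffPairing (f k) P := by
  classical
  induction t using Finset.induction_on with
  | empty => simp [diffPairing]
  | insert _ _ h ih =>
      rw [Finset.sum_insert h, Finset.sum_insert h, diffPairing_add_left, ih]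

lemma homOp_expand (M : Matrix (Fin m) (Fin m) ℝ) (T : MvPolynomial (Fin m) ℝ) :
    homOp M T = ∑ i, ∑ j, M i j • (MvPolynomial.X j * pderiv i T) := by
  rw [homOp]
  refine Finset.sum_congr rfl fun i _ => ?_
  rw [Finset.sum_mul]
  refine Finset.sum_congr rfl fun j _ => ?_
  rw [mul_assoc, ← MvPolynomial.smul_eq_C_mul]

/-- On homogeneous polynomials of degree `ℓ`, the adjoint of `S ↦ DS(x)·(L0 x)`
for the pairing `⟨S,S'⟩ = (S(∂ₓ)S')(0)` is `S ↦ DS(x)·(L0ᵀ x)`. -/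
theorem homOp_adjoint {m ℓ : ℕ} (L : Matrix (Fin m) (Fin m) ℝ)
    (S S' : MvPolynomial (Fin m) ℝ)
    (hS : S.IsHomogeneous ℓ) (hS' : S'.IsHomogeneous ℓ) :
    diffPairing (homOp L S) S' = diffPairing S (homOp L.transpose S') := by
  have key : ∀ (i j : Fin m), diffPairing (X j * pderiv i S) S'
      = diffPairing S (X i * pderiv j S') := by
    intro i j
    rw [diffPairing_X_mul, diffPairing_comm S, diffPairing_X_mul, diffPairing_comm]
  rw [homOp_expand, homOp_expand, diffPairing_comm S, diffPairing_sum_left]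
  rw [diffPairing_sum_left]
  simp only [diffPairing_sum_left, diffPairing_smul_left]
  rw [Finset.sum_comm]
  refine Finset.sum_congr rfl fun i _ => Finset.sum_congr rfl fun j _ => ?_
  rw [key j i, diffPairing_comm, Matrix.transpose_apply]
end
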